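/- Any non-graph admissible curve γ satisfies E[γ] > min{1, (π²ε² + 1)α}. -/

import Mathlib

open MeasureTheory Real Set

noncomputable section

/-- The (signed) curvature of a planar curve `γ` at parameter `t`. -/
def curvature (γ : ℝ → ℝ × ℝ) (t : ℝ) : ℝ :=
  ((deriv γ t).1 * (deriv (deriv γ) t).2 - (deriv γ t).2 * (deriv (deriv γ) t).1)
    / ‖deriv γ t‖ ^ 3

/-- Admissible curves above the substrate ψ: regular curves of Sobolev class H²
(modelled as C²) confined in the closed epigraph of ψ, satisfying the periodic
boundary conditions x(0)=0, x(1)=1, y(0)=y(1), γ'(0)=γ'(1). -/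
def Admissible (ψ : ℝ → ℝ) (γ : ℝ → ℝ × ℝ) : Prop :=
  ContDiff ℝ 2 γ ∧ (∀ t ∈ Icc (0:ℝ) 1, deriv γ t ≠ 0) ∧
  (∀ t ∈ Icc (0:ℝ) 1, ψ (γ t).1 ≤ (γ t).2) ∧
  (γ 0).1 = 0 ∧ (γ 1).1 = 1 ∧ (γ 0).2 = (γ 1).2 ∧ deriv γ 0 = deriv γ 1

/-- The contact potential: Θ = α on the graph of ψ, Θ = 1 off it. -/
def contactPotential (ψ : ℝ → ℝ) (α : ℝ) (p : ℝ × ℝ) : ℝ :=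
  if p.2 = ψ p.1 then α else 1

/-- Total energy of one period: E[γ] = ∫ [ε²κ² + Θ(γ)] ds. -/
def Energy (ψ : ℝ → ℝ) (α ε : ℝ) (γ : ℝ → ℝ × ℝ) : ℝ :=
  ∫ t in Icc (0:ℝ) 1, (ε ^ 2 * curvature γ t ^ 2 + contactPotential ψ α (γ t)) * ‖deriv γ t‖

/-- Length of one period of the curve. -/
def Length (γ : ℝ → ℝ × ℝ) : ℝ := ∫ t in Icc (0:ℝ) 1, ‖deriv γ t‖

/-- A curve is a graph curve if x'(t) > 0 for all t. -/
def IsGraph (γ : ℝ → ℝ × ℝ) : Prop := ∀ t ∈ Icc (0:ℝ) 1, 0 < (deriv γ t).1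

/-! ### Auxiliary lemmas -/

lemma aux_integral_pos {f : ℝ → ℝ} (hc : ContinuousOn f (Icc 0 1))
    (h0 : ∀ t ∈ Icc (0:ℝ) 1, 0 ≤ f t) {t₀ : ℝ} (ht₀ : t₀ ∈ Icc (0:ℝ) 1)
    (hpos : 0 < f t₀) : 0 < ∫ t in Icc (0:ℝ) 1, f t := by
  have hint : IntegrableOn f (Icc 0 1) := hc.integrableOn_Icc
  rw [MeasureTheory.setIntegral_pos_iff_support_of_nonneg_ae ?_ hint]
  · have hev : ∀ᶠ y in nhdsWithin t₀ (Icc 0 1), 0 < f y :=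
      (hc t₀ ht₀).eventually_const_lt hpos
    rw [Filter.Eventually, Metric.mem_nhdsWithin_iff] at hev
    obtain ⟨ε, hε, hball⟩ := hev
    set c := max 0 (t₀ - ε) with hc'
    set d := min 1 (t₀ + ε) with hd'
    have hcd : c < d := by
      rcases ht₀ with ⟨h1, h2⟩
      rw [hc', hd']
      apply max_lt_iff.mpr
      constructor
      · exact lt_min_iff.mpr ⟨by norm_num, by linarith⟩
      · exact lt_min_iff.mpr ⟨by linarith, by linarith⟩
    have hsub : Ioo c d ⊆ Function.support f ∩ Icc 0 1 := by
      intro y hy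
      have hy1 : y ∈ Icc (0:ℝ) 1 := ⟨le_of_lt (lt_of_le_of_lt (le_max_left _ _) hy.1),
        le_of_lt (lt_of_lt_of_le hy.2 (min_le_left _ _))⟩
      have hyd : dist y t₀ < ε := by
        rw [Real.dist_eq, abs_lt]
        constructor
        · have := lt_of_le_of_lt (le_max_right _ _) hy.1; linarith
        · have := lt_of_lt_of_le hy.2 (min_le_right _ _); linarith
      exact ⟨ne_of_gt (hball ⟨Metric.mem_ball.mpr hyd, hy1⟩), hy1⟩
    calc (0:ENNReal) < volume (Ioo c d) := by rw [Real.volume_Ioo]; simp [hcd]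
    _ ≤ _ := measure_mono hsub
  · filter_upwards [ae_restrict_mem measurableSet_Icc] with x hx using h0 x hx

lemma aux_CS {f g : ℝ → ℝ} (hg0 : ∀ t ∈ Icc (0:ℝ) 1, 0 ≤ g t)
    (h1 : IntegrableOn (fun t => f t ^ 2 * g t) (Icc 0 1))
    (h2 : IntegrableOn (fun t => |f t| * g t) (Icc 0 1))
    (h3 : IntegrableOn g (Icc 0 1))
    (hL : 0 < ∫ t in Icc (0:ℝ) 1, g t) :
    (∫ t in Icc (0:ℝ) 1, |f t| * g t) ^ 2 ≤
      (∫ t in Icc (0:ℝ) 1, f t ^ 2 * g t) * ∫ t in Icc (0:ℝ) 1, g t := by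
  set K := ∫ t in Icc (0:ℝ) 1, |f t| * g t with hK
  set I := ∫ t in Icc (0:ℝ) 1, f t ^ 2 * g t with hI
  set L := ∫ t in Icc (0:ℝ) 1, g t with hLdef
  set c := K / L with hc
  have key : 0 ≤ ∫ t in Icc (0:ℝ) 1, (f t ^ 2 * g t - 2 * c * (|f t| * g t) + c ^ 2 * g t) := by
    apply setIntegral_nonneg measurableSet_Icc
    intro t ht
    have h := hg0 t ht
    have : f t ^ 2 * g t - 2 * c * (|f t| * g t) + c ^ 2 * g t = (|f t| - c) ^ 2 * g t := by
      have : |f t| ^ 2 = f t ^ 2 := sq_abs _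
      nlinarith [this]
    rw [this]
    positivity
  have h4 : IntegrableOn (fun t => 2 * c * (|f t| * g t)) (Icc 0 1) := h2.const_mul _
  have h5 : IntegrableOn (fun t => c ^ 2 * g t) (Icc 0 1) := h3.const_mul _
  have e1 : (∫ t in Icc (0:ℝ) 1, (f t ^ 2 * g t - 2 * c * (|f t| * g t) + c ^ 2 * g t)) =
      I - 2 * c * K + c ^ 2 * L := by
    have h6 : IntegrableOn (fun t => f t ^ 2 * g t - 2 * c * (|f t| * g t)) (Icc 0 1) := h1.sub h4
    rw [MeasureTheory.integral_add h6 h5, MeasureTheory.integral_sub h1 h4,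
      MeasureTheory.integral_const_mul, MeasureTheory.integral_const_mul]
  rw [e1] at key
  have hLne : L ≠ 0 := ne_of_gt hL
  have : I - 2 * c * K + c ^ 2 * L = I - K ^ 2 / L := by
    rw [hc]; field_simp; ring
  rw [this] at key
  have : K ^ 2 / L ≤ I := by linarith
  calc K ^ 2 = K ^ 2 / L * L := by field_simp
  _ ≤ I * L := by apply mul_le_mul_of_nonneg_right this (le_of_lt hL)

set_option maxHeartbeats 4000000 in
/-- Any non-graph admissible curve γ satisfies E[γ] > min{1, (π²ε² + 1)α}. -/
theorem nongraph_energy_lower_bound (ψ : ℝ → ℝ) (hψ : Continuous ψ)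
    (hper : Function.Periodic ψ 1) (α ε : ℝ) (hα : 0 < α) (hα1 : α < 1) (hε : 0 < ε)
    (γ : ℝ → ℝ × ℝ) (hγ : Admissible ψ γ) (hng : ¬ IsGraph γ) :
    min 1 ((π ^ 2 * ε ^ 2 + 1) * α) < Energy ψ α ε γ := by
  obtain ⟨hγ2, hreg, hepi, hx0, hx1, hy01, hper'⟩ := hγ
  -- smoothness facts
  have hsm : Continuous (deriv (deriv γ)) ∧ ContDiff ℝ 1 (deriv γ) ∧
      Differentiable ℝ (deriv γ) := by
    have h2 : ContDiff ℝ (1+1 : WithTop ℕ∞) γ := by norm_num at hγ2 ⊢; exact hγ2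
    rw [contDiff_succ_iff_deriv] at h2
    have h1 := h2.2.2
    rw [contDiff_one_iff_deriv] at h1
    exact ⟨h1.2, h2.2.2, h1.1⟩
  obtain ⟨hGc, hF1cd, hFd⟩ := hsm
  have hγd : Differentiable ℝ γ := hγ2.differentiable (by norm_num)
  set F := deriv γ with hFdef
  set G := deriv F with hGdef
  have hFc : Continuous F := hFd.continuous
  -- non-graph point
  have hng' : ∃ t₀ ∈ Icc (0:ℝ) 1, (F t₀).1 ≤ 0 := by
    unfold IsGraph at hng
    push_neg at hng
    obtain ⟨t₀, ht₀, h⟩ := hng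
    exact ⟨t₀, ht₀, h⟩
  obtain ⟨t₀, ht₀, ht₀le⟩ := hng'
  -- component derivatives
  have hd1 : ∀ t, HasDerivAt (fun s => (F s).1) ((G t).1) t := fun t =>
    (ContinuousLinearMap.fst ℝ ℝ ℝ).hasFDerivAt.comp_hasDerivAt t (hFd t).hasDerivAt
  have hd2 : ∀ t, HasDerivAt (fun s => (F s).2) ((G t).2) t := fun t =>
    (ContinuousLinearMap.snd ℝ ℝ ℝ).hasFDerivAt.comp_hasDerivAt t (hFd t).hasDerivAt
  have hgd1 : ∀ t, HasDerivAt (fun s => (γ s).1) ((F t).1) t := fun t =>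
    (ContinuousLinearMap.fst ℝ ℝ ℝ).hasFDerivAt.comp_hasDerivAt t (hγd t).hasDerivAt
  have hgd2 : ∀ t, HasDerivAt (fun s => (γ s).2) ((F t).2) t := fun t =>
    (ContinuousLinearMap.snd ℝ ℝ ℝ).hasFDerivAt.comp_hasDerivAt t (hγd t).hasDerivAt
  have hF1c : Continuous fun t => (F t).1 := continuous_fst.comp hFc
  have hF2c : Continuous fun t => (F t).2 := continuous_snd.comp hFc
  have hG1c : Continuous fun t => (G t).1 := continuous_fst.comp hGc
  have hG2c : Continuous fun t => (G t).2 := continuous_snd.comp hGc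
  -- Euclidean norm r
  set r := fun t => Real.sqrt ((F t).1 ^ 2 + (F t).2 ^ 2) with hrdef
  have hrc : Continuous r := ((hF1c.pow 2).add (hF2c.pow 2)).sqrt
  have hsqpos : ∀ t ∈ Icc (0:ℝ) 1, 0 < (F t).1 ^ 2 + (F t).2 ^ 2 := by
    intro t ht
    have hne := hreg t ht
    have hor : (F t).1 ≠ 0 ∨ (F t).2 ≠ 0 := by
      by_contra h
      push_neg at h
      exact hne (Prod.ext_iff.mpr ⟨by simpa using h.1, by simpa using h.2⟩)
    rcases hor with h | h
    · have := pow_two_pos_of_ne_zero h; nlinarith [sq_nonneg (F t).2]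
    · have := pow_two_pos_of_ne_zero h; nlinarith [sq_nonneg (F t).1]
  have hrpos : ∀ t ∈ Icc (0:ℝ) 1, 0 < r t := fun t ht => Real.sqrt_pos.mpr (hsqpos t ht)
  have hr2 : ∀ t, r t ^ 2 = (F t).1 ^ 2 + (F t).2 ^ 2 := fun t =>
    Real.sq_sqrt (by positivity)
  -- cross product and angle speed
  set cross := fun t => (F t).1 * (G t).2 - (F t).2 * (G t).1 with hcrossdef
  have hcrossc : Continuous cross := (hF1c.mul hG2c).sub (hF2c.mul hG1c)
  set clamp := fun t : ℝ => max 0 (min 1 t) with hclampdef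
  have hclampc : Continuous clamp := continuous_const.max (continuous_const.min continuous_id)
  have hclampIcc : ∀ t, clamp t ∈ Icc (0:ℝ) 1 := fun t =>
    ⟨le_max_left _ _, max_le (by norm_num) (min_le_left _ _)⟩
  have hclampeq : ∀ t ∈ Icc (0:ℝ) 1, clamp t = t := by
    intro t ht
    rw [hclampdef]
    simp only
    rw [min_eq_right ht.2, max_eq_right ht.1]
  set wt := fun t => cross (clamp t) / r (clamp t) ^ 2 with hwtdef
  have hwtc : Continuous wt :=
    (hcrossc.comp hclampc).div ((hrc.comp hclampc).pow 2)
      (fun t => ne_of_gt (pow_pos (hrpos _ (hclampIcc t)) 2))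
  have hwt_eq : ∀ t ∈ Icc (0:ℝ) 1, wt t = cross t / r t ^ 2 := by
    intro t ht; rw [hwtdef]; simp only [hclampeq t ht]
  -- the angle function
  set θ₀ := Complex.arg ⟨(F 0).1, (F 0).2⟩ with hθ₀def
  set θ := fun t => θ₀ + ∫ s in (0:ℝ)..t, wt s with hθdef
  have hθd : ∀ t, HasDerivAt θ (wt t) t := fun t =>
    (intervalIntegral.integral_hasDerivAt_right (hwtc.intervalIntegrable _ _)
      hwtc.stronglyMeasurable.stronglyMeasurableAtFilter hwtc.continuousAt).const_add θ₀
  have hθc : Continuous θ := continuous_iff_continuousAt.mpr fun t => (hθd t).continuousAt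
  have hθ0 : θ 0 = θ₀ := by rw [hθdef]; simp
  -- a and u
  set a := fun t => Real.cos (θ t) * (F t).1 + Real.sin (θ t) * (F t).2 with hadef
  set u := fun t => Real.cos (θ t) * (F t).2 - Real.sin (θ t) * (F t).1 with hudef
  set A := fun t => (-Real.sin (θ t) * wt t * (F t).1 + Real.cos (θ t) * (G t).1) +
    (Real.cos (θ t) * wt t * (F t).2 + Real.sin (θ t) * (G t).2) with hAdef
  set U := fun t => (-Real.sin (θ t) * wt t * (F t).2 + Real.cos (θ t) * (G t).2) -
    (Real.cos (θ t) * wt t * (F t).1 + Real.sin (θ t) * (G t).1) with hUdef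
  have had : ∀ t, HasDerivAt a (A t) t := fun t =>
    (((hθd t).cos).mul (hd1 t)).add (((hθd t).sin).mul (hd2 t))
  have hud : ∀ t, HasDerivAt u (U t) t := fun t =>
    (((hθd t).cos).mul (hd2 t)).sub (((hθd t).sin).mul (hd1 t))
  have hac : Continuous a := ((Real.continuous_cos.comp hθc).mul hF1c).add
    ((Real.continuous_sin.comp hθc).mul hF2c)
  have huc : Continuous u := ((Real.continuous_cos.comp hθc).mul hF2c).sub
    ((Real.continuous_sin.comp hθc).mul hF1c)
  have hAc : Continuous A := by
    apply Continuous.add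
    · exact (((Real.continuous_sin.comp hθc).neg.mul hwtc).mul hF1c).add
        ((Real.continuous_cos.comp hθc).mul hG1c)
    · exact (((Real.continuous_cos.comp hθc).mul hwtc).mul hF2c).add
        ((Real.continuous_sin.comp hθc).mul hG2c)
  have hUc : Continuous U := by
    apply Continuous.sub
    · exact (((Real.continuous_sin.comp hθc).neg.mul hwtc).mul hF2c).add
        ((Real.continuous_cos.comp hθc).mul hG2c)
    · exact (((Real.continuous_cos.comp hθc).mul hwtc).mul hF1c).add
        ((Real.continuous_sin.comp hθc).mul hG1c)
  -- algebraic identities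
  have hau : ∀ t, a t ^ 2 + u t ^ 2 = r t ^ 2 := by
    intro t
    have h1 := Real.sin_sq_add_cos_sq (θ t)
    have h2 := hr2 t
    rw [hadef, hudef]
    simp only
    linear_combination ((F t).1 ^ 2 + (F t).2 ^ 2) * h1 - h2
  have hUA : ∀ t ∈ Icc (0:ℝ) 1, U t * a t - A t * u t = 0 := by
    intro t ht
    have hW := hwt_eq t ht
    have hR := hr2 t
    have hRne : r t ^ 2 ≠ 0 := ne_of_gt (pow_pos (hrpos t ht) 2)
    rw [hUdef, hAdef, hadef, hudef]
    simp only
    rw [hW]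
    have hd : cross t / r t ^ 2 * r t ^ 2 = cross t := div_mul_cancel₀ _ hRne
    linear_combination (Real.cos (θ t) ^ 2 + Real.sin (θ t) ^ 2) * (cross t / r t ^ 2 * hR - hd)
  -- the factor lam
  set lam := fun t => (a t * A t + u t * U t) / r t ^ 2 with hlamdef
  have hlamc : ContinuousOn lam (Icc 0 1) := by
    apply ContinuousOn.div
    · exact ((hac.mul hAc).add (huc.mul hUc)).continuousOn
    · exact (hrc.pow 2).continuousOn
    · exact fun t ht => ne_of_gt (pow_pos (hrpos t ht) 2)
  obtain ⟨M, hM⟩ := (isCompact_Icc).exists_bound_of_continuousOn hlamc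
  have hUlam : ∀ t ∈ Icc (0:ℝ) 1, U t = lam t * u t := by
    intro t ht
    have hRne : r t ^ 2 ≠ 0 := ne_of_gt (pow_pos (hrpos t ht) 2)
    have key : U t * r t ^ 2 = (a t * A t + u t * U t) * u t := by
      linear_combination (a t) * (hUA t ht) - (U t) * (hau t)
    have h7 : lam t * u t = (U t * r t ^ 2) / r t ^ 2 := by
      rw [hlamdef]
      simp only
      rw [div_mul_eq_mul_div, key]
    rw [h7]
    exact (mul_div_cancel_right₀ _ hRne).symm
  -- u vanishes at 0
  have hu0 : u 0 = 0 := by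
    have hFne : F 0 ≠ 0 := hreg 0 ⟨le_refl _, by norm_num⟩
    have hz : (⟨(F 0).1, (F 0).2⟩ : ℂ) ≠ 0 := by
      intro h
      rw [Complex.ext_iff] at h
      exact hFne (Prod.ext_iff.mpr ⟨by simpa using h.1, by simpa using h.2⟩)
    have habs : ‖(⟨(F 0).1, (F 0).2⟩ : ℂ)‖ = r 0 := by
      rw [Complex.norm_def, Complex.normSq_mk, hrdef]
      simp only
      ring_nf
    have hcos : Real.cos θ₀ = (F 0).1 / r 0 := by
      rw [hθ₀def, Complex.cos_arg hz, habs]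
    have hsin : Real.sin θ₀ = (F 0).2 / r 0 := by
      rw [hθ₀def, Complex.sin_arg, habs]
    have hr0 : r 0 ≠ 0 := ne_of_gt (hrpos 0 ⟨le_refl _, by norm_num⟩)
    rw [hudef]
    simp only [hθ0, hcos, hsin]
    field_simp
    ring
  -- u vanishes identically on Icc 0 1 (Gronwall)
  have huz : ∀ t ∈ Icc (0:ℝ) 1, u t = 0 := by
    intro t ht
    have := norm_le_gronwallBound_of_norm_deriv_right_le
      (f := u) (f' := U) (δ := 0) (K := M) (ε := 0) (a := 0) (b := 1)
      (fun x _ => (hud x).continuousAt.continuousWithinAt)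
      (fun x _ => (hud x).hasDerivWithinAt)
      (by simp [hu0]) ?_ t ht
    · rw [gronwallBound_ε0_δ0] at this
      exact norm_le_zero_iff.mp this
    · intro x hx
      have hx' : x ∈ Icc (0:ℝ) 1 := Ico_subset_Icc_self hx
      rw [hUlam x hx']
      rw [add_zero]
      calc ‖lam x * u x‖ = ‖lam x‖ * ‖u x‖ := norm_mul _ _
      _ ≤ M * ‖u x‖ := mul_le_mul_of_nonneg_right (hM x hx') (norm_nonneg _)
  -- a = r on Icc 0 1
  have ha0 : a 0 = r 0 := by
    have hFne : F 0 ≠ 0 := hreg 0 ⟨le_refl _, by norm_num⟩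
    have hz : (⟨(F 0).1, (F 0).2⟩ : ℂ) ≠ 0 := by
      intro h
      rw [Complex.ext_iff] at h
      exact hFne (Prod.ext_iff.mpr ⟨by simpa using h.1, by simpa using h.2⟩)
    have habs : ‖(⟨(F 0).1, (F 0).2⟩ : ℂ)‖ = r 0 := by
      rw [Complex.norm_def, Complex.normSq_mk, hrdef]
      simp only
      ring_nf
    have hcos : Real.cos θ₀ = (F 0).1 / r 0 := by
      rw [hθ₀def, Complex.cos_arg hz, habs]
    have hsin : Real.sin θ₀ = (F 0).2 / r 0 := by
      rw [hθ₀def, Complex.sin_arg, habs]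
    have hr0 : r 0 ≠ 0 := ne_of_gt (hrpos 0 ⟨le_refl _, by norm_num⟩)
    have hR := hr2 0
    rw [hadef]
    simp only [hθ0, hcos, hsin]
    field_simp
    linarith [hR]
  have hane : ∀ t ∈ Icc (0:ℝ) 1, a t ≠ 0 := by
    intro t ht h
    have h1 := hau t
    rw [h, huz t ht] at h1
    have := hrpos t ht
    nlinarith
  have hapos : ∀ t ∈ Icc (0:ℝ) 1, 0 < a t := by
    intro t ht
    by_contra h
    push_neg at h
    have hlt : a t < 0 := lt_of_le_of_ne h (hane t ht)
    have h0pos : 0 < a 0 := by rw [ha0]; exact hrpos 0 ⟨le_refl _, by norm_num⟩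
    have hcont : ContinuousOn a (uIcc 0 t) := hac.continuousOn
    have hmem : (0:ℝ) ∈ uIcc (a 0) (a t) := by
      rw [Set.mem_uIcc]
      right
      exact ⟨le_of_lt hlt, le_of_lt h0pos⟩
    obtain ⟨s, hs, has⟩ := intermediate_value_uIcc hcont hmem
    have hsub : uIcc (0:ℝ) t ⊆ Icc (0:ℝ) 1 := by
      rw [uIcc_of_le ht.1]
      exact Icc_subset_Icc (le_refl _) ht.2
    exact hane s (hsub hs) has
  have haeq : ∀ t ∈ Icc (0:ℝ) 1, a t = r t := by
    intro t ht
    have h1 := hau t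
    rw [huz t ht] at h1
    have h2 : (a t - r t) * (a t + r t) = 0 := by linear_combination h1
    rcases mul_eq_zero.mp h2 with h | h
    · linarith
    · exfalso
      have := hapos t ht
      have := hrpos t ht
      linarith
  -- polar representation of F on Icc 0 1
  have hcs1 : ∀ x : ℝ, Real.sin x ^ 2 + Real.cos x ^ 2 = 1 := Real.sin_sq_add_cos_sq
  have hFpol1 : ∀ t ∈ Icc (0:ℝ) 1, (F t).1 = r t * Real.cos (θ t) := by
    intro t ht
    have e : (F t).1 = Real.cos (θ t) * a t - Real.sin (θ t) * u t := by
      rw [hadef, hudef]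
      simp only
      linear_combination (-(F t).1) * hcs1 (θ t)
    rw [e, haeq t ht, huz t ht]
    ring
  have hFpol2 : ∀ t ∈ Icc (0:ℝ) 1, (F t).2 = r t * Real.sin (θ t) := by
    intro t ht
    have e : (F t).2 = Real.sin (θ t) * a t + Real.cos (θ t) * u t := by
      rw [hadef, hudef]
      simp only
      linear_combination (-(F t).2) * hcs1 (θ t)
    rw [e, haeq t ht, huz t ht]
    ring
  -- membership shortcuts
  have h0mem : (0:ℝ) ∈ Icc (0:ℝ) 1 := ⟨le_refl _, by norm_num⟩
  have h1mem : (1:ℝ) ∈ Icc (0:ℝ) 1 := ⟨by norm_num, le_refl _⟩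
  have hF01 : F 0 = F 1 := hper'
  have hr01 : r 1 = r 0 := by rw [hrdef]; simp only [← hF01]
  have hr1pos := hrpos 1 h1mem
  have hr0pos := hrpos 0 h0mem
  have hcos01 : Real.cos (θ 1) = Real.cos (θ 0) := by
    have e1 := hFpol1 1 h1mem
    have e0 := hFpol1 0 h0mem
    apply mul_left_cancel₀ (ne_of_gt hr0pos)
    calc r 0 * Real.cos (θ 1) = r 1 * Real.cos (θ 1) := by rw [hr01]
    _ = (F 1).1 := e1.symm
    _ = (F 0).1 := by rw [← hF01]
    _ = r 0 * Real.cos (θ 0) := e0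
  have hsin01 : Real.sin (θ 1) = Real.sin (θ 0) := by
    have e1 := hFpol2 1 h1mem
    have e0 := hFpol2 0 h0mem
    apply mul_left_cancel₀ (ne_of_gt hr0pos)
    calc r 0 * Real.sin (θ 1) = r 1 * Real.sin (θ 1) := by rw [hr01]
    _ = (F 1).2 := e1.symm
    _ = (F 0).2 := by rw [← hF01]
    _ = r 0 * Real.sin (θ 0) := e0
  have hone : Real.cos (θ 1 - θ 0) = 1 := by
    rw [Real.cos_sub, hcos01, hsin01, ← Real.sin_sq_add_cos_sq (θ 0)]
    ring
  obtain ⟨k, hk⟩ := (Real.cos_eq_one_iff _).1 hone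
  have hθdiff : θ 1 - θ 0 = ∫ s in (0:ℝ)..1, wt s := by
    rw [hθdef]; simp
  set K := ∫ s in (0:ℝ)..1, |wt s| with hKdef
  have hwtabsc : Continuous fun s => |wt s| := hwtc.abs
  -- FTC for the components of γ
  have hintF1 : ∫ t in Icc (0:ℝ) 1, (F t).1 = 1 := by
    rw [MeasureTheory.integral_Icc_eq_integral_Ioc,
      ← intervalIntegral.integral_of_le (by norm_num : (0:ℝ) ≤ 1),
      intervalIntegral.integral_eq_sub_of_hasDerivAt (fun t _ => hgd1 t)
        (hF1c.intervalIntegrable _ _), hx1, hx0]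
    norm_num
  have hintF2 : ∫ t in Icc (0:ℝ) 1, (F t).2 = 0 := by
    rw [MeasureTheory.integral_Icc_eq_integral_Ioc,
      ← intervalIntegral.integral_of_le (by norm_num : (0:ℝ) ≤ 1),
      intervalIntegral.integral_eq_sub_of_hasDerivAt (fun t _ => hgd2 t)
        (hF2c.intervalIntegrable _ _)]
    rw [← hy01]
    ring
  -- total curvature at least π
  have hKpi : π ≤ K := by
    rcases eq_or_ne k 0 with hk0 | hk0
    · by_contra hlt
      push_neg at hlt
      have hθ10 : θ 1 = θ 0 := by
        have := hk
        rw [hk0] at this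
        simp at this
        linarith
      have hsplitK : ∀ t ∈ Icc (0:ℝ) 1, |θ t - θ t₀| < π / 2 := by
        intro t ht
        set p := min t t₀ with hpdef
        set q := max t t₀ with hqdef
        have hp0 : 0 ≤ p := le_min ht.1 ht₀.1
        have hpq : p ≤ q := min_le_max
        have hq1 : q ≤ 1 := max_le ht.2 ht₀.2
        have hint : ∀ x y : ℝ, θ y - θ x = ∫ s in x..y, wt s := by
          intro x y
          have h := intervalIntegral.integral_add_adjacent_intervals (μ := volume) (f := wt)
            (a := 0) (b := x) (c := y) (hwtc.intervalIntegrable 0 x) (hwtc.intervalIntegrable x y)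
          rw [hθdef]
          simp only [add_sub_add_left_eq_sub]
          linarith [h]
        have h1 : |θ q - θ p| ≤ ∫ s in p..q, |wt s| := by
          rw [hint p q]
          exact intervalIntegral.abs_integral_le_integral_abs hpq
        have h2 : |θ q - θ p| ≤ (∫ s in (0:ℝ)..p, |wt s|) + ∫ s in q..1, |wt s| := by
          have b1 : |θ p - θ 0| ≤ ∫ s in (0:ℝ)..p, |wt s| := by
            rw [hint 0 p]
            exact intervalIntegral.abs_integral_le_integral_abs hp0
          have b2 : |θ 1 - θ q| ≤ ∫ s in q..1, |wt s| := by
            rw [hint q 1]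
            exact intervalIntegral.abs_integral_le_integral_abs hq1
          have h3 : θ q - θ p = -(θ p - θ 0) - (θ 1 - θ q) := by linarith [hθ10]
          have h4 : |θ q - θ p| ≤ |θ p - θ 0| + |θ 1 - θ q| := by
            rw [h3]
            calc |-(θ p - θ 0) - (θ 1 - θ q)| ≤ |-(θ p - θ 0)| + |θ 1 - θ q| := abs_sub _ _
            _ = |θ p - θ 0| + |θ 1 - θ q| := by rw [abs_neg]
          linarith
        have hsum : (∫ s in (0:ℝ)..p, |wt s|) + (∫ s in p..q, |wt s|)
            + (∫ s in q..1, |wt s|) = K := by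
          rw [hKdef,
            intervalIntegral.integral_add_adjacent_intervals
              (hwtabsc.intervalIntegrable 0 p) (hwtabsc.intervalIntegrable p q),
            intervalIntegral.integral_add_adjacent_intervals
              (hwtabsc.intervalIntegrable 0 q) (hwtabsc.intervalIntegrable q 1)]
        have habs_eq : |θ t - θ t₀| = |θ q - θ p| := by
          rcases le_total t t₀ with h | h
          · rw [hpdef, hqdef, min_eq_left h, max_eq_right h, abs_sub_comm]
          · rw [hpdef, hqdef, min_eq_right h, max_eq_left h]
        rw [habs_eq]
        linarith
      have hcosθt : ∀ t ∈ Icc (0:ℝ) 1, 0 < Real.cos (θ t - θ t₀) := by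
        intro t ht
        have h := abs_lt.mp (hsplitK t ht)
        exact Real.cos_pos_of_mem_Ioo ⟨by linarith [h.1], h.2⟩
      have hIval : ∫ t in Icc (0:ℝ) 1, (r t * Real.cos (θ t - θ t₀)) = Real.cos (θ t₀) := by
        have hcongr : EqOn (fun t => r t * Real.cos (θ t - θ t₀))
            (fun t => Real.cos (θ t₀) * (F t).1 + Real.sin (θ t₀) * (F t).2) (Icc 0 1) := by
          intro t ht
          simp only
          rw [Real.cos_sub, hFpol1 t ht, hFpol2 t ht]
          ring
        rw [MeasureTheory.setIntegral_congr_fun measurableSet_Icc hcongr,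
          MeasureTheory.integral_add ((hF1c.integrableOn_Icc).const_mul _)
            ((hF2c.integrableOn_Icc).const_mul _),
          MeasureTheory.integral_const_mul, MeasureTheory.integral_const_mul,
          hintF1, hintF2]
        ring
      have hIpos : 0 < ∫ t in Icc (0:ℝ) 1, (r t * Real.cos (θ t - θ t₀)) := by
        apply aux_integral_pos
        · exact (hrc.mul (Real.continuous_cos.comp (hθc.sub continuous_const))).continuousOn
        · intro t ht
          exact le_of_lt (mul_pos (hrpos t ht) (hcosθt t ht))
        · exact h0mem
        · exact mul_pos (hrpos 0 h0mem) (hcosθt 0 h0mem)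
      have hcos_t₀ : Real.cos (θ t₀) ≤ 0 := by
        have hp := hFpol1 t₀ ht₀
        nlinarith [hrpos t₀ ht₀]
      rw [hIval] at hIpos
      linarith
    · have h1 : 2 * π ≤ |θ 1 - θ 0| := by
        rw [← hk, abs_mul]
        have hk1 : (1:ℝ) ≤ |(k:ℝ)| := by
          rw [← Int.cast_abs]
          exact_mod_cast Int.one_le_abs hk0
        have hpi := Real.pi_pos
        have h2π : |2 * π| = 2 * π := abs_of_pos (by linarith)
        rw [h2π]
        nlinarith
      have h2 : |θ 1 - θ 0| ≤ K := by
        rw [hθdiff]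
        exact intervalIntegral.abs_integral_le_integral_abs (by norm_num)
      have hpi := Real.pi_pos
      linarith
  -- length, curvature integrals, and the energy estimate
  set v := fun t => ‖F t‖ with hvdef
  have hvc : Continuous v := hFc.norm
  have hvpos : ∀ t ∈ Icc (0:ℝ) 1, 0 < v t := fun t ht => norm_pos_iff.mpr (hreg t ht)
  have hv_le_r : ∀ t, v t ≤ r t := by
    intro t
    rw [hvdef, hrdef]
    simp only
    rw [Prod.norm_def]
    apply max_le
    · rw [Real.norm_eq_abs, ← Real.sqrt_sq_eq_abs]
      exact Real.sqrt_le_sqrt (by nlinarith [sq_nonneg (F t).2])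
    · rw [Real.norm_eq_abs, ← Real.sqrt_sq_eq_abs]
      exact Real.sqrt_le_sqrt (by nlinarith [sq_nonneg (F t).1])
  have hF1_le_v : ∀ t, (F t).1 ≤ v t := fun t =>
    le_trans (le_abs_self _) (by simpa using norm_fst_le (F t))
  have hκ : ∀ t, curvature γ t = cross t / v t ^ 3 := fun t => rfl
  have hκc : ContinuousOn (curvature γ) (Icc 0 1) := by
    apply ContinuousOn.congr (f := curvature γ) (g := fun t => cross t / v t ^ 3)
    · exact hcrossc.continuousOn.div ((hvc.pow 3).continuousOn)
        (fun t ht => pow_ne_zero 3 (ne_of_gt (hvpos t ht)))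
    · exact fun t _ => hκ t
  -- integrabilities
  have hint_v : IntegrableOn v (Icc 0 1) := hvc.continuousOn.integrableOn_Icc
  have hint_F1 : IntegrableOn (fun t => (F t).1) (Icc 0 1) := hF1c.continuousOn.integrableOn_Icc
  have hint_kv : IntegrableOn (fun t => |curvature γ t| * v t) (Icc 0 1) :=
    (hκc.abs.mul hvc.continuousOn).integrableOn_Icc
  have hint_k2v : IntegrableOn (fun t => curvature γ t ^ 2 * v t) (Icc 0 1) :=
    ((hκc.pow 2).mul hvc.continuousOn).integrableOn_Icc
  have hint_eps : IntegrableOn (fun t => ε ^ 2 * curvature γ t ^ 2 * v t) (Icc 0 1) :=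
    (((continuousOn_const.mul (hκc.pow 2)).mul hvc.continuousOn)).integrableOn_Icc
  -- contact potential
  set Θf := fun t => contactPotential ψ α (γ t) with hΘdef
  have hΘmeas : Measurable Θf := by
    have hS : MeasurableSet {t : ℝ | (γ t).2 = ψ (γ t).1} := by
      apply IsClosed.measurableSet
      apply isClosed_eq
      · exact continuous_snd.comp hγ2.continuous
      · exact hψ.comp (continuous_fst.comp hγ2.continuous)
    exact Measurable.ite hS measurable_const measurable_const
  have hΘ_lb : ∀ t, α ≤ Θf t := by
    intro t
    rw [hΘdef]
    simp only [contactPotential]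
    split
    · exact le_refl _
    · linarith
  have hΘ_ub : ∀ t, Θf t ≤ 1 := by
    intro t
    rw [hΘdef]
    simp only [contactPotential]
    split
    · linarith
    · exact le_refl _
  have hint_Θv : IntegrableOn (fun t => Θf t * v t) (Icc 0 1) := by
    apply MeasureTheory.Integrable.mono' hint_v
      ((hΘmeas.aestronglyMeasurable.restrict).mul hvc.aestronglyMeasurable.restrict)
    apply Filter.Eventually.of_forall
    intro t
    have h1 : |Θf t| ≤ 1 := abs_le.mpr ⟨by linarith [hΘ_lb t], hΘ_ub t⟩
    calc ‖Θf t * v t‖ = |Θf t| * |v t| := by rw [norm_mul]; rfl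
    _ ≤ 1 * |v t| := mul_le_mul_of_nonneg_right h1 (abs_nonneg _)
    _ = v t := by rw [one_mul, abs_of_nonneg (norm_nonneg _)]
  -- energy decomposition
  have hE : Energy ψ α ε γ = ∫ t in Icc (0:ℝ) 1,
      (ε ^ 2 * curvature γ t ^ 2 + Θf t) * v t := rfl
  have hEsplit : Energy ψ α ε γ = (∫ t in Icc (0:ℝ) 1, ε ^ 2 * curvature γ t ^ 2 * v t)
      + ∫ t in Icc (0:ℝ) 1, Θf t * v t := by
    rw [hE, ← MeasureTheory.integral_add hint_eps hint_Θv]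
    apply MeasureTheory.setIntegral_congr_fun measurableSet_Icc
    intro t _
    simp only
    ring
  -- length exceeds 1
  have hLdef : Length γ = ∫ t in Icc (0:ℝ) 1, v t := rfl
  have hL1 : 1 < Length γ := by
    have hpos : 0 < ∫ t in Icc (0:ℝ) 1, (v t - (F t).1) := by
      apply aux_integral_pos ((hvc.sub hF1c).continuousOn)
        (fun t _ => sub_nonneg.mpr (hF1_le_v t)) ht₀
      have := hvpos t₀ ht₀
      simp only [Pi.sub_apply]
      linarith
    rw [MeasureTheory.integral_sub hint_v hint_F1, hintF1] at hpos
    rw [hLdef]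
    linarith
  have hLpos : 0 < Length γ := by linarith
  -- contact term lower bound
  have hΘv_ge : α * Length γ ≤ ∫ t in Icc (0:ℝ) 1, Θf t * v t := by
    have h1 : ∫ t in Icc (0:ℝ) 1, α * v t = α * Length γ := by
      rw [MeasureTheory.integral_const_mul, hLdef]
    rw [← h1]
    apply MeasureTheory.setIntegral_mono_on (hint_v.const_mul α) hint_Θv measurableSet_Icc
    intro t _
    exact mul_le_mul_of_nonneg_right (hΘ_lb t) (norm_nonneg _)
  -- total curvature bound transfers
  have hK_le : K ≤ ∫ t in Icc (0:ℝ) 1, |curvature γ t| * v t := by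
    have hKicc : K = ∫ t in Icc (0:ℝ) 1, |wt t| := by
      rw [hKdef, intervalIntegral.integral_of_le (by norm_num : (0:ℝ) ≤ 1),
        ← MeasureTheory.integral_Icc_eq_integral_Ioc]
    rw [hKicc]
    apply MeasureTheory.setIntegral_mono_on
      (hwtabsc.continuousOn.integrableOn_Icc) hint_kv measurableSet_Icc
    intro t ht
    have hv := hvpos t ht
    have hr := hrpos t ht
    have hvr := hv_le_r t
    rw [hwt_eq t ht, hκ t, abs_div, abs_div,
      abs_of_pos (pow_pos hr 2), abs_of_pos (pow_pos hv 3), div_mul_eq_mul_div]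
    have h3 : |cross t| * v t / v t ^ 3 = |cross t| / v t ^ 2 := by
      field_simp
    rw [h3]
    apply div_le_div_of_nonneg_left (abs_nonneg _) (pow_pos hv 2)
    exact pow_le_pow_left₀ (le_of_lt hv) hvr 2
  -- Cauchy–Schwarz
  have hCS : π ^ 2 ≤ (∫ t in Icc (0:ℝ) 1, curvature γ t ^ 2 * v t) * Length γ := by
    have h := aux_CS (f := curvature γ) (g := v) (fun t _ => norm_nonneg _)
      hint_k2v hint_kv hint_v (by rw [← hLdef]; exact hLpos)
    have hKnn : (0:ℝ) ≤ K := le_trans (le_of_lt Real.pi_pos) hKpi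
    have h2 : π ^ 2 ≤ (∫ t in Icc (0:ℝ) 1, |curvature γ t| * v t) ^ 2 := by
      nlinarith [hKpi, hK_le, Real.pi_pos, hKnn]
    calc π ^ 2 ≤ (∫ t in Icc (0:ℝ) 1, |curvature γ t| * v t) ^ 2 := h2
    _ ≤ (∫ t in Icc (0:ℝ) 1, curvature γ t ^ 2 * v t) * ∫ t in Icc (0:ℝ) 1, v t := h
    _ = (∫ t in Icc (0:ℝ) 1, curvature γ t ^ 2 * v t) * Length γ := by rw [← hLdef]
  have hIeps : (∫ t in Icc (0:ℝ) 1, ε ^ 2 * curvature γ t ^ 2 * v t)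
      = ε ^ 2 * ∫ t in Icc (0:ℝ) 1, curvature γ t ^ 2 * v t := by
    rw [← MeasureTheory.integral_const_mul]
    apply MeasureTheory.setIntegral_congr_fun measurableSet_Icc
    intro t _
    simp only
    ring
  -- final case analysis
  rcases le_or_gt (Length γ) (1 / α) with hcase | hcase
  · -- moderate length: use the curvature term
    have hinv : α ≤ 1 / Length γ := by
      rw [le_div_iff₀ hLpos]
      calc α * Length γ ≤ α * (1 / α) := by
            exact mul_le_mul_of_nonneg_left hcase (le_of_lt hα)
      _ = 1 := by field_simp
    have hIk2 : π ^ 2 * α ≤ ∫ t in Icc (0:ℝ) 1, curvature γ t ^ 2 * v t := by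
      have h1 : π ^ 2 / Length γ ≤ ∫ t in Icc (0:ℝ) 1, curvature γ t ^ 2 * v t := by
        rw [div_le_iff₀ hLpos]
        exact hCS
      have h2 : π ^ 2 * α ≤ π ^ 2 / Length γ := by
        rw [div_eq_mul_one_div]
        exact mul_le_mul_of_nonneg_left hinv (sq_nonneg π)
      linarith
    have hαL : α < α * Length γ := by nlinarith
    calc min 1 ((π ^ 2 * ε ^ 2 + 1) * α) ≤ (π ^ 2 * ε ^ 2 + 1) * α := min_le_right _ _
    _ < Energy ψ α ε γ := by
        rw [hEsplit, hIeps]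
        nlinarith [hΘv_ge, hIk2, sq_nonneg ε, mul_le_mul_of_nonneg_left hIk2 (le_of_lt (pow_pos hε 2))]
  · -- long curve: the contact term alone exceeds 1
    have h1 : 1 < α * Length γ := by
      rw [div_lt_iff₀ hα] at hcase
      linarith
    have hIeps_nn : 0 ≤ ∫ t in Icc (0:ℝ) 1, ε ^ 2 * curvature γ t ^ 2 * v t := by
      apply MeasureTheory.setIntegral_nonneg measurableSet_Icc
      intro t _
      positivity
    calc min 1 ((π ^ 2 * ε ^ 2 + 1) * α) ≤ 1 := min_le_left _ _
    _ < Energy ψ α ε γ := by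
        rw [hEsplit]
        linarith

end
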